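/- arXiv:1905.12257 — 2 statements merged into one kernel-verified Lean document; each statement's English description precedes it below -/
import Mathlib

section
/- Let X, Y be Banach spaces and G ∈ L(X,Y) with ‖G‖ = 1. Then the numerical index with respect to the adjoint dominates from below: n_{G*}(Y*, X*) ≤ n_G(X, Y). -/
open NormedSpace

/-- Numerical radius of `z` with respect to the unit vector `u`. -/
noncomputable def vRad {Z : Type*} [NormedAddCommGroup Z] [NormedSpace ℝ Z] (u z : Z) : ℝ :=
  sSup {r : ℝ | ∃ φ : StrongDual ℝ Z, ‖φ‖ = 1 ∧ φ u = 1 ∧ |φ z| = r}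

/-- Numerical index of the space with respect to the unit vector `u`. -/
noncomputable def nInd {Z : Type*} [NormedAddCommGroup Z] [NormedSpace ℝ Z] (u : Z) : ℝ :=
  sInf {r : ℝ | ∃ z : Z, ‖z‖ = 1 ∧ vRad u z = r}

/-- The adjoint of a continuous linear operator between real normed spaces. -/
noncomputable def adjOp {X Y : Type*} [NormedAddCommGroup X] [NormedSpace ℝ X]
    [NormedAddCommGroup Y] [NormedSpace ℝ Y] (G : X →L[ℝ] Y) :
    (Y →L[ℝ] ℝ) →L[ℝ] (X →L[ℝ] ℝ) :=
  (ContinuousLinearMap.compL ℝ X Y ℝ).flip G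

section aux

variable {X Y : Type*} [NormedAddCommGroup X] [NormedSpace ℝ X]
    [NormedAddCommGroup Y] [NormedSpace ℝ Y]

lemma adjOp_apply (G : X →L[ℝ] Y) (φ : Y →L[ℝ] ℝ) : adjOp G φ = φ.comp G := rfl

lemma adjOp_norm_le (G : X →L[ℝ] Y) : ‖adjOp G‖ ≤ ‖G‖ := by
  refine ContinuousLinearMap.opNorm_le_bound _ (norm_nonneg G) fun φ => ?_
  rw [adjOp_apply]
  calc ‖φ.comp G‖ ≤ ‖φ‖ * ‖G‖ := ContinuousLinearMap.opNorm_comp_le _ _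
    _ = ‖G‖ * ‖φ‖ := mul_comm _ _

lemma norm_le_adjOp_norm (G : X →L[ℝ] Y) : ‖G‖ ≤ ‖adjOp G‖ := by
  refine ContinuousLinearMap.opNorm_le_bound _ (norm_nonneg (adjOp G)) fun x => ?_
  refine norm_le_dual_bound ℝ (G x) (by positivity) fun φ => ?_
  calc ‖φ (G x)‖ = ‖(adjOp G φ) x‖ := rfl
    _ ≤ ‖adjOp G φ‖ * ‖x‖ := ContinuousLinearMap.le_opNorm _ _
    _ ≤ (‖adjOp G‖ * ‖φ‖) * ‖x‖ := by
        apply mul_le_mul_of_nonneg_right (ContinuousLinearMap.le_opNorm _ _) (norm_nonneg x)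
    _ = ‖adjOp G‖ * ‖x‖ * ‖φ‖ := by ring

lemma adjOp_norm (G : X →L[ℝ] Y) : ‖adjOp G‖ = ‖G‖ :=
  le_antisymm (adjOp_norm_le G) (norm_le_adjOp_norm G)

/-- The adjoint map as a continuous linear map. -/
noncomputable def adjCLM (X Y : Type*) [NormedAddCommGroup X] [NormedSpace ℝ X]
    [NormedAddCommGroup Y] [NormedSpace ℝ Y] :
    (X →L[ℝ] Y) →L[ℝ] ((Y →L[ℝ] ℝ) →L[ℝ] (X →L[ℝ] ℝ)) :=
  (ContinuousLinearMap.compL ℝ X Y ℝ).flip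

lemma adjCLM_apply (G : X →L[ℝ] Y) : adjCLM X Y G = adjOp G := rfl

lemma vRad_bddAbove {Z : Type*} [NormedAddCommGroup Z] [NormedSpace ℝ Z] (u z : Z) :
    BddAbove {r : ℝ | ∃ φ : StrongDual ℝ Z, ‖φ‖ = 1 ∧ φ u = 1 ∧ |φ z| = r} := by
  refine ⟨‖z‖, fun r hr => ?_⟩
  obtain ⟨φ, hφ, _, hr⟩ := hr
  rw [← hr]
  calc |φ z| = ‖φ z‖ := rfl
    _ ≤ ‖φ‖ * ‖z‖ := ContinuousLinearMap.le_opNorm _ _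
    _ = ‖z‖ := by rw [hφ, one_mul]

lemma vRad_nonneg_of_unit {Z : Type*} [NormedAddCommGroup Z] [NormedSpace ℝ Z]
    {u : Z} (hu : ‖u‖ = 1) (z : Z) : 0 ≤ vRad u z := by
  obtain ⟨φ, hφ, hφu⟩ := exists_dual_vector ℝ u (by intro h; rw [h] at hu; simp at hu)
  rw [hu] at hφu
  have hmem : |φ z| ∈ {r : ℝ | ∃ ψ : StrongDual ℝ Z, ‖ψ‖ = 1 ∧ ψ u = 1 ∧ |ψ z| = r} :=
    ⟨φ, hφ, by exact_mod_cast hφu, rfl⟩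
  exact le_trans (abs_nonneg _) (le_csSup (vRad_bddAbove u z) hmem)

/-- The key comparison: the numerical radius of the adjoint with respect to the adjoint of `G`
is at most the numerical radius of the original operator. -/
lemma vRad_adj_le (G T : X →L[ℝ] Y) (hG : ‖G‖ = 1) :
    vRad (adjOp G) (adjOp T) ≤ vRad G T := by
  refine Real.sSup_le (fun r hr => ?_) (vRad_nonneg_of_unit hG T)
  obtain ⟨Φ, hΦ, hΦG, hΦT⟩ := hr
  set φ : StrongDual ℝ (X →L[ℝ] Y) := Φ.comp (adjCLM X Y) with hφdef
  have hφG : φ G = 1 := hΦG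
  have hφle : ‖φ‖ ≤ 1 := by
    refine ContinuousLinearMap.opNorm_le_bound _ zero_le_one fun S => ?_
    calc ‖φ S‖ = ‖Φ (adjOp S)‖ := rfl
      _ ≤ ‖Φ‖ * ‖adjOp S‖ := ContinuousLinearMap.le_opNorm _ _
      _ = ‖S‖ := by rw [hΦ, adjOp_norm, one_mul]
      _ = 1 * ‖S‖ := (one_mul _).symm
  have hφge : (1 : ℝ) ≤ ‖φ‖ := by
    have := φ.le_opNorm G
    rw [hφG, hG, mul_one] at this
    simpa using this
  have hφ : ‖φ‖ = 1 := le_antisymm hφle hφge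
  have hmem : r ∈ {r : ℝ | ∃ ψ : StrongDual ℝ (X →L[ℝ] Y), ‖ψ‖ = 1 ∧ ψ G = 1 ∧ |ψ T| = r} :=
    ⟨φ, hφ, hφG, hΦT⟩
  exact le_csSup (vRad_bddAbove G T) hmem

end aux

theorem stmt10 {X Y : Type*} [NormedAddCommGroup X] [NormedSpace ℝ X] [CompleteSpace X]
    [NormedAddCommGroup Y] [NormedSpace ℝ Y] [CompleteSpace Y]
    (G : X →L[ℝ] Y) (hG : ‖G‖ = 1) :
    nInd (adjOp G) ≤ nInd G := by
  unfold nInd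
  have hGadj : ‖adjOp G‖ = 1 := by rw [adjOp_norm, hG]
  have hBbdd : BddBelow {r : ℝ | ∃ z : (Y →L[ℝ] ℝ) →L[ℝ] (X →L[ℝ] ℝ),
      ‖z‖ = 1 ∧ vRad (adjOp G) z = r} := by
    refine ⟨0, fun r hr => ?_⟩
    obtain ⟨z, hz, hr⟩ := hr
    rw [← hr]
    exact vRad_nonneg_of_unit hGadj z
  have hAne : {r : ℝ | ∃ z : X →L[ℝ] Y, ‖z‖ = 1 ∧ vRad G z = r}.Nonempty :=
    ⟨vRad G G, G, hG, rfl⟩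
  refine le_csInf hAne fun r hr => ?_
  obtain ⟨T, hT, hr⟩ := hr
  have hTadj : ‖adjOp T‖ = 1 := by rw [adjOp_norm, hT]
  have hmem : vRad (adjOp G) (adjOp T) ∈ {r : ℝ | ∃ z : (Y →L[ℝ] ℝ) →L[ℝ] (X →L[ℝ] ℝ),
      ‖z‖ = 1 ∧ vRad (adjOp G) z = r} := ⟨adjOp T, hTadj, rfl⟩
  calc sInf {r : ℝ | ∃ z : (Y →L[ℝ] ℝ) →L[ℝ] (X →L[ℝ] ℝ), ‖z‖ = 1 ∧ vRad (adjOp G) z = r}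
      ≤ vRad (adjOp G) (adjOp T) := csInf_le hBbdd hmem
    _ ≤ vRad G T := vRad_adj_le G T hG
    _ = r := hr
end

section
/- Let X, Y be Banach spaces, G ∈ L(X,Y) with ‖G‖ = 1, and suppose there exists T ∈ L(X) with v(T) = 0 (numerical radius zero with respect to the identity of X) and G ∘ T ≠ 0. Then n_G(X,Y) = 0. -/
open NormedSpace

lemma vRad_nonneg {Z : Type*} [NormedAddCommGroup Z] [NormedSpace ℝ Z] (u z : Z) :
    0 ≤ vRad u z := by
  apply Real.sSup_nonneg
  rintro r ⟨φ, _, _, rfl⟩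
  exact abs_nonneg _

lemma abs_le_vRad {Z : Type*} [NormedAddCommGroup Z] [NormedSpace ℝ Z] (u z : Z)
    (φ : StrongDual ℝ Z) (hφ : ‖φ‖ = 1) (hu : φ u = 1) : |φ z| ≤ vRad u z := by
  apply le_csSup
  · refine ⟨‖z‖, ?_⟩
    rintro r ⟨ψ, hψ, _, rfl⟩
    calc |ψ z| = ‖ψ z‖ := (Real.norm_eq_abs _).symm
      _ ≤ ‖ψ‖ * ‖z‖ := ψ.le_opNorm z
      _ = ‖z‖ := by rw [hψ, one_mul]
  · exact ⟨φ, hφ, hu, rfl⟩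

theorem stmt12 {X Y : Type*} [NormedAddCommGroup X] [NormedSpace ℝ X] [CompleteSpace X]
    [NormedAddCommGroup Y] [NormedSpace ℝ Y] [CompleteSpace Y]
    (G : X →L[ℝ] Y) (hG : ‖G‖ = 1) (T : X →L[ℝ] X)
    (hT : vRad (ContinuousLinearMap.id ℝ X) T = 0) (hGT : G.comp T ≠ 0) :
    nInd G = 0 := by
  obtain ⟨x, hx⟩ : ∃ x, G (T x) ≠ 0 := by
    by_contra h
    push_neg at h
    exact hGT (ContinuousLinearMap.ext fun x => h x)
  have hxne : x ≠ 0 := fun h => hx (by simp [h])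
  haveI : Nontrivial X := ⟨⟨x, 0, hxne⟩⟩
  have hGTnorm : ‖G.comp T‖ ≠ 0 := norm_ne_zero_iff.mpr hGT
  set z := ‖G.comp T‖⁻¹ • (G.comp T) with hz
  have hznorm : ‖z‖ = 1 := by
    have h := norm_smul ‖G.comp T‖⁻¹ (G.comp T)
    rw [hz, h]
    simp [inv_mul_cancel₀ hGTnorm, abs_of_nonneg (inv_nonneg.mpr (norm_nonneg _))]
  -- Key: every norming functional for G vanishes on G ∘ T
  have hkey : ∀ φ : StrongDual ℝ (X →L[ℝ] Y), ‖φ‖ = 1 → φ G = 1 → φ (G.comp T) = 0 := by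
    intro φ hφ hφG
    set ψ : StrongDual ℝ (X →L[ℝ] X) := φ.comp ((ContinuousLinearMap.compL ℝ X X Y) G) with hψdef
    have hψT : ψ T = φ (G.comp T) := rfl
    have hψid : ψ (ContinuousLinearMap.id ℝ X) = 1 := by
      have : (ContinuousLinearMap.compL ℝ X X Y) G (ContinuousLinearMap.id ℝ X) = G := by
        ext v; simp
      simp [hψdef, ContinuousLinearMap.comp_apply, this, hφG]
    have hψle : ‖ψ‖ ≤ 1 := by
      apply ContinuousLinearMap.opNorm_le_bound _ zero_le_one
      intro S
      calc ‖ψ S‖ = ‖φ (G.comp S)‖ := rfl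
        _ ≤ ‖φ‖ * ‖G.comp S‖ := φ.le_opNorm _
        _ ≤ 1 * (‖G‖ * ‖S‖) := by
            rw [hφ, one_mul, one_mul]
            exact ContinuousLinearMap.opNorm_comp_le _ _
        _ = 1 * ‖S‖ := by rw [hG]; ring
    have hψge : 1 ≤ ‖ψ‖ := by
      have h1 := ψ.le_opNorm (ContinuousLinearMap.id ℝ X)
      rw [hψid, ContinuousLinearMap.norm_id, mul_one] at h1
      simpa using h1
    have hψ1 : ‖ψ‖ = 1 := le_antisymm hψle hψge
    have hle : |ψ T| ≤ vRad (ContinuousLinearMap.id ℝ X) T :=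
      abs_le_vRad _ _ ψ hψ1 hψid
    rw [hT] at hle
    have : ψ T = 0 := abs_eq_zero.mp (le_antisymm hle (abs_nonneg _))
    rwa [hψT] at this
  -- vRad G z = 0
  have hvz : vRad G z = 0 := by
    apply le_antisymm _ (vRad_nonneg _ _)
    apply Real.sSup_nonpos
    rintro r ⟨φ, hφ, hφG, rfl⟩
    have : φ z = 0 := by
      rw [hz, map_smul, hkey φ hφ hφG, smul_zero]
    rw [this, abs_zero]
  -- conclude
  have hmem : (0 : ℝ) ∈ {r : ℝ | ∃ w : (X →L[ℝ] Y), ‖w‖ = 1 ∧ vRad G w = r} :=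
    ⟨z, hznorm, hvz⟩
  apply le_antisymm
  · exact csInf_le ⟨0, by rintro r ⟨w, _, rfl⟩; exact vRad_nonneg _ _⟩ hmem
  · apply Real.sInf_nonneg
    rintro r ⟨w, _, rfl⟩
    exact vRad_nonneg _ _
end
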